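/- (Jensen-type determinant formula for AR spectra) If X is a symmetric positive semidefinite m(n+1)×m(n+1) real matrix with top-left m×m block X_{00} positive definite, and X = A^T A with A = [A_0, ..., A_n] ∈ ℝ^{m × m(n+1)} such that the matrix polynomial A(z) = Σ_j A_j z^j has no zeros of det in the closed unit disk, then (1/2π) ∫_{-π}^{π} log det( Δ(e^{iθ}) X Δ(e^{iθ})* ) dθ = log det(A_0^T A_0) = log det X_{00}. -/

import Mathlib

open Matrix Finset
open scoped ComplexOrder

/-- The shift operator Δ(e^{iθ}) = [I_m, e^{iθ}I_m, ..., e^{inθ}I_m]. -/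
noncomputable def Delta (m n : ℕ) (θ : ℝ) : Matrix (Fin m) (Fin (n+1) × Fin m) ℂ :=
  fun i p => Complex.exp (Complex.I * (p.1 : ℕ) * θ) * (if i = p.2 then 1 else 0)

/-- D_0(X) = Σ_h X_{hh} (sum of diagonal blocks). -/
def Dop0 {m n : ℕ} (X : Matrix (Fin (n+1) × Fin m) (Fin (n+1) × Fin m) ℝ) :
    Matrix (Fin m) (Fin m) ℝ :=
  fun a b => ∑ h : Fin (n+1), X (h, a) (h, b)

/-- D_j(X) = 2 Σ_h X_{h, h+j}, for j ≥ 1. -/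
def DopJ {m n : ℕ} (X : Matrix (Fin (n+1) × Fin m) (Fin (n+1) × Fin m) ℝ) (j : ℕ) :
    Matrix (Fin m) (Fin m) ℝ :=
  fun a b => 2 * ∑ h : Fin (n+1), ∑ k : Fin (n+1),
    if (k : ℕ) = (h : ℕ) + j then X (h, a) (k, b) else 0

/-- Symmetric block Toeplitz matrix with first block row Y. -/
def Tobl {m n : ℕ} (Y : Fin (n+1) → Matrix (Fin m) (Fin m) ℝ) :
    Matrix (Fin (n+1) × Fin m) (Fin (n+1) × Fin m) ℝ :=
  fun p q =>
    if (p.1 : ℕ) ≤ (q.1 : ℕ) then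
      Y ⟨(q.1 : ℕ) - (p.1 : ℕ), lt_of_le_of_lt (Nat.sub_le _ _) q.1.isLt⟩ p.2 q.2
    else
      Y ⟨(p.1 : ℕ) - (q.1 : ℕ), lt_of_le_of_lt (Nat.sub_le _ _) p.1.isLt⟩ q.2 p.2

/-- Singular values of a square complex matrix (unsorted): square roots of
the eigenvalues of AᴴA. -/
noncomputable def singularValues {m : ℕ} (A : Matrix (Fin m) (Fin m) ℂ) : Fin m → ℝ :=
  fun i => Real.sqrt ((Matrix.posSemidef_conjTranspose_mul_self A).1.eigenvalues i)

/-- The k-th largest singular value (k = 0 gives the largest). -/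
noncomputable def sdesc {m : ℕ} (A : Matrix (Fin m) (Fin m) ℂ) : Fin m → ℝ :=
  fun i => (singularValues A ∘ Tuple.sort (singularValues A)) i.rev

/-- Largest singular value (operator norm). -/
noncomputable def opNorm {m : ℕ} (A : Matrix (Fin m) (Fin m) ℂ) : ℝ :=
  ⨆ i, singularValues A i

open Complex Polynomial Metric in
lemma mean_value {g : ℂ → ℂ} (hg : ∀ z ∈ Metric.closedBall (0:ℂ) 1, DifferentiableAt ℂ g z) :
    ∫ θ in (0:ℝ)..(2*Real.pi), (g (circleMap 0 1 θ)).re = 2 * Real.pi * (g 0).re := by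
  have hmem : ∀ θ : ℝ, circleMap 0 1 θ ∈ Metric.closedBall (0:ℂ) 1 := by
    intro θ; simp [Metric.mem_closedBall, Complex.dist_eq, norm_circleMap_zero]
  have hcont : Continuous fun θ : ℝ => g (circleMap 0 1 θ) := by
    refine continuous_iff_continuousAt.2 fun θ => ?_
    exact ((hg _ (hmem θ)).continuousAt).comp (continuous_circleMap 0 1).continuousAt
  have hd : DiffContOnCl ℂ g (Metric.ball 0 1) := by
    constructor
    · exact fun z hz => (hg z (Metric.ball_subset_closedBall hz)).differentiableWithinAt
    · rw [closure_ball 0 one_ne_zero]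
      exact fun z hz => (hg z hz).continuousAt.continuousWithinAt
  have h := hd.circleIntegral_sub_inv_smul (w := 0) (Metric.mem_ball_self one_pos)
  rw [circleIntegral] at h
  have heq : ∀ θ ∈ Set.uIcc (0:ℝ) (2*Real.pi),
      deriv (circleMap 0 1) θ • ((circleMap 0 1 θ - 0)⁻¹ • g (circleMap 0 1 θ))
        = I * g (circleMap 0 1 θ) := by
    intro θ _
    have h0 : circleMap 0 1 θ ≠ 0 := circleMap_ne_center one_ne_zero
    rw [deriv_circleMap, smul_eq_mul, smul_eq_mul, sub_zero]
    field_simp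
  rw [intervalIntegral.integral_congr heq, intervalIntegral.integral_const_mul] at h
  have h2 : ∫ θ in (0:ℝ)..2*Real.pi, g (circleMap 0 1 θ) = 2*Real.pi * g 0 := by
    have hI : (I:ℂ) ≠ 0 := I_ne_zero
    rw [smul_eq_mul] at h
    refine mul_left_cancel₀ hI (h.trans (by ring))
  have h3 := congrArg Complex.re h2
  have h4 : (∫ θ in (0:ℝ)..2*Real.pi, g (circleMap 0 1 θ)).re
      = ∫ θ in (0:ℝ)..2*Real.pi, (g (circleMap 0 1 θ)).re := by
    rw [← Complex.reCLM_apply, ← Complex.reCLM.intervalIntegral_comp_comm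
      (hcont.intervalIntegrable _ _)]
    rfl
  rw [h4] at h3
  rw [h3]
  simp [Complex.mul_re]

open Complex Polynomial in
lemma jensen_poly (p : Polynomial ℂ) (hp : ∀ z : ℂ, ‖z‖ ≤ 1 → p.eval z ≠ 0) :
    ∫ θ in (0:ℝ)..(2*Real.pi), Real.log (‖(p.eval (circleMap 0 1 θ))‖)
      = 2 * Real.pi * Real.log (‖(p.eval 0)‖) := by
  have hp0 : p ≠ 0 := fun h => hp 0 (by simp) (by simp [h])
  set l : List ℂ := p.roots.toList with hl
  have hroots : ∀ r ∈ p.roots, 1 < ‖r‖ := by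
    intro r hr
    by_contra hle
    exact hp r (not_lt.1 hle) ((Polynomial.isRoot_of_mem_roots hr))
  have hlr : ∀ i : Fin l.length, 1 < ‖l[(i:ℕ)]‖ := by
    intro i
    exact hroots _ (Multiset.mem_toList.1 (List.getElem_mem _))
  -- the log branch
  set g : ℂ → ℂ := fun z => Complex.log (p.eval 0)
      + ∑ i : Fin l.length, Complex.log (1 - z / l[(i:ℕ)]) with hg
  have hslit : ∀ z ∈ Metric.closedBall (0:ℂ) 1, ∀ i : Fin l.length,
      (1 - z / l[(i:ℕ)]) ∈ Complex.slitPlane := by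
    intro z hz i
    rw [Complex.mem_slitPlane_iff]
    left
    have h1 : ‖(z / l[(i:ℕ)])‖ < 1 := by
      rw [norm_div]
      have := hlr i
      have hz1 : ‖z‖ ≤ 1 := by simpa [Complex.dist_eq] using hz
      calc ‖z‖ / ‖l[(i:ℕ)]‖ ≤ 1 / ‖l[(i:ℕ)]‖ := by
            apply div_le_div_of_nonneg_right hz1 -- maybe wrong name
            exact norm_nonneg _
          _ < 1 := by rw [div_lt_one (by linarith)]; linarith
    have h2 : (z / l[(i:ℕ)]).re ≤ ‖(z / l[(i:ℕ)])‖ := Complex.re_le_norm _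
    simp only [Complex.sub_re, Complex.one_re]
    linarith
  have hne : ∀ z ∈ Metric.closedBall (0:ℂ) 1, ∀ i : Fin l.length,
      (1 - z / l[(i:ℕ)]) ≠ 0 := by
    intro z hz i
    exact Complex.slitPlane_ne_zero (hslit z hz i)
  have hdiff : ∀ z ∈ Metric.closedBall (0:ℂ) 1, DifferentiableAt ℂ g z := by
    intro z hz
    apply DifferentiableAt.add (differentiableAt_const _)
    apply DifferentiableAt.fun_sum
    intro i _
    have : DifferentiableAt ℂ (fun z : ℂ => 1 - z / l[(i:ℕ)]) z := by
      apply DifferentiableAt.sub (differentiableAt_const _)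
      exact differentiableAt_id.div_const _
    exact (Complex.differentiableAt_log (hslit z hz i)).comp z this
  -- factorization
  have hfac : p = C p.leadingCoeff * (p.roots.map fun a => X - C a).prod :=
    (IsAlgClosed.splits p).eq_prod_roots
  have hevalfac : ∀ z : ℂ, p.eval z = p.leadingCoeff * ∏ i : Fin l.length, (z - l[(i:ℕ)]) := by
    intro z
    conv_lhs => rw [hfac]
    rw [eval_mul, eval_C, eval_multiset_prod, Multiset.map_map]
    congr 1
    have : p.roots = (l : Multiset ℂ) := (Multiset.coe_toList _).symm
    rw [Fin.prod_univ_fun_getElem l (fun a => z - a), hl, ← Multiset.prod_coe,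
      ← Multiset.map_coe, Multiset.coe_toList]
    exact congrArg Multiset.prod (Multiset.map_congr rfl fun a _ => by simp)
  have hexp : ∀ z ∈ Metric.closedBall (0:ℂ) 1, Complex.exp (g z) = p.eval z := by
    intro z hz
    rw [hg]
    simp only
    rw [Complex.exp_add, Complex.exp_log (hp 0 (by simp)), Complex.exp_sum]
    have hprodeq : ∏ i : Fin l.length, Complex.exp (Complex.log (1 - z / l[(i:ℕ)]))
        = ∏ i : Fin l.length, (1 - z / l[(i:ℕ)]) :=
      Finset.prod_congr rfl fun i _ => Complex.exp_log (hne z hz i)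
    rw [hprodeq, hevalfac z, hevalfac 0]
    rw [mul_assoc, ← Finset.prod_mul_distrib]
    congr 1
    apply Finset.prod_congr rfl
    intro i _
    have h0 : l[(i:ℕ)] ≠ (0:ℂ) := by
      intro h
      have h1 := hlr i
      rw [h] at h1
      simp only [norm_zero] at h1
      linarith
    field_simp
    ring
  have hre : ∀ z ∈ Metric.closedBall (0:ℂ) 1,
      (g z).re = Real.log (‖(p.eval z)‖) := by
    intro z hz
    rw [← hexp z hz, Complex.norm_exp, Real.log_exp]
  have hmem : ∀ θ : ℝ, circleMap 0 1 θ ∈ Metric.closedBall (0:ℂ) 1 := by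
    intro θ; simp [Complex.dist_eq, norm_circleMap_zero]
  calc ∫ θ in (0:ℝ)..(2*Real.pi), Real.log (‖(p.eval (circleMap 0 1 θ))‖)
      = ∫ θ in (0:ℝ)..(2*Real.pi), (g (circleMap 0 1 θ)).re := by
        apply intervalIntegral.integral_congr
        intro θ _
        exact (hre _ (hmem θ)).symm
    _ = 2 * Real.pi * (g 0).re := mean_value hdiff
    _ = 2 * Real.pi * Real.log (‖(p.eval 0)‖) := by
        rw [hre 0 (by simp)]

/-- Jensen-type determinant formula: if `X = AᵀA ⪰ 0` with
`X_{00} ≻ 0` and the matrix polynomial `A(z) = Σ_j A_j z^j` has `det A(z) ≠ 0`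
on the closed unit disk, then
`(1/2π) ∫ log det(Δ X Δ*) dθ = log det(A_0ᵀ A_0) = log det X_{00}`. -/
theorem stmt_8 (m n : ℕ)
    (X : Matrix (Fin (n+1) × Fin m) (Fin (n+1) × Fin m) ℝ)
    (A : Matrix (Fin m) (Fin (n+1) × Fin m) ℝ)
    (hXA : X = Aᵀ * A)
    (hX00 : (Matrix.of fun a b : Fin m => X (0, a) (0, b)).PosDef)
    (hdet : ∀ z : ℂ, ‖z‖ ≤ 1 →
      (∑ j : Fin (n+1), z ^ (j : ℕ) • ((Matrix.of fun a b : Fin m => A a (j, b)).map Complex.ofReal)).det ≠ 0) :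
    (2 * Real.pi)⁻¹
        * ∫ θ in (-Real.pi)..Real.pi,
            Real.log (Delta m n θ * X.map Complex.ofReal * (Delta m n θ)ᴴ).det.re
      = Real.log ((Matrix.of fun a b : Fin m => A a (0, b))ᵀ
            * (Matrix.of fun a b : Fin m => A a (0, b))).det
    ∧ Real.log ((Matrix.of fun a b : Fin m => A a (0, b))ᵀ
            * (Matrix.of fun a b : Fin m => A a (0, b))).det
      = Real.log (Matrix.of fun a b : Fin m => X (0, a) (0, b)).det := by
  set Mc : Fin (n+1) → Matrix (Fin m) (Fin m) ℂ :=
    fun j => (Matrix.of fun a b : Fin m => A a (j, b)).map Complex.ofReal with hMc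
  -- the polynomial
  set P : Matrix (Fin m) (Fin m) (Polynomial ℂ) :=
    ∑ j : Fin (n+1), ((Polynomial.X : Polynomial ℂ) ^ (j:ℕ)) • ((Mc j).map Polynomial.C) with hP
  set p : Polynomial ℂ := P.det with hp'
  have key : ∀ z : ℂ, p.eval z = (∑ j : Fin (n+1), z ^ (j:ℕ) • Mc j).det := by
    intro z
    have h1 : p.eval z = (Polynomial.evalRingHom z) P.det := rfl
    rw [h1, RingHom.map_det]
    congr 1
    ext a b
    simp [hP, Matrix.sum_apply, Matrix.map_apply, Matrix.smul_apply, smul_eq_mul,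
      Polynomial.eval_finset_sum]
    exact Finset.sum_congr rfl fun j _ => mul_comm _ _
  have hp : ∀ z : ℂ, ‖z‖ ≤ 1 → p.eval z ≠ 0 := by
    intro z hz
    rw [key z]
    exact hdet z hz
  -- the matrix identity
  have hXc : (Aᵀ * A).map Complex.ofReal
      = (A.map Complex.ofReal)ᴴ * (A.map Complex.ofReal) := by
    ext q r
    simp only [Matrix.map_apply, Matrix.mul_apply, Matrix.conjTranspose_apply,
      Matrix.transpose_apply, Complex.conj_ofReal, ]
    push_cast
    try simp only [Complex.star_def, Complex.conj_ofReal]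
  -- B(θ) = A(e^{-iθ})
  have hB : ∀ θ : ℝ, (A.map Complex.ofReal) * (Delta m n θ)ᴴ
      = ∑ j : Fin (n+1), (Complex.exp (-(θ:ℂ) * Complex.I)) ^ (j:ℕ) • Mc j := by
    intro θ
    ext a b
    simp only [Matrix.mul_apply, Matrix.conjTranspose_apply, Matrix.map_apply,
      Matrix.sum_apply, Matrix.smul_apply, smul_eq_mul, Delta, Fintype.sum_prod_type]
    refine Finset.sum_congr rfl fun j _ => ?_
    rw [Finset.sum_eq_single b ?h1 ?h2]
    case h1 => intro c _ hc; simp [Ne.symm hc]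
    case h2 => intro h; exact absurd (Finset.mem_univ b) h
    have hstar : star (Complex.exp (Complex.I * ((j:ℕ):ℂ) * (θ:ℂ)))
        = Complex.exp (-(θ:ℂ) * Complex.I) ^ (j:ℕ) := by
      rw [← Complex.exp_nat_mul, Complex.star_def, ← Complex.exp_conj]
      congr 1
      simp only [_root_.map_mul, Complex.conj_I, Complex.conj_ofReal, Complex.conj_natCast]
      ring
    rw [if_pos rfl, mul_one, hstar, mul_comm]
    rfl
  -- determinant identity
  have hdet2 : ∀ θ : ℝ, (Delta m n θ * X.map Complex.ofReal * (Delta m n θ)ᴴ).det.re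
      = ‖(p.eval (circleMap 0 1 (-θ)))‖ ^ 2 := by
    intro θ
    have hc : circleMap 0 1 (-θ) = Complex.exp (-(θ:ℂ) * Complex.I) := by
      simp [circleMap]
    have hsplit : Delta m n θ * X.map Complex.ofReal * (Delta m n θ)ᴴ
        = ((A.map Complex.ofReal) * (Delta m n θ)ᴴ)ᴴ * ((A.map Complex.ofReal) * (Delta m n θ)ᴴ) := by
      rw [hXA, hXc, Matrix.conjTranspose_mul, Matrix.conjTranspose_conjTranspose]
      simp only [Matrix.mul_assoc]
    rw [hsplit, hB θ, Matrix.det_mul, Matrix.det_conjTranspose, hc, key]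
    have hms : ∀ d : ℂ, (star d * d).re = ‖d‖ ^ 2 := by
      intro d
      rw [Complex.star_def, mul_comm, Complex.mul_conj, Complex.ofReal_re, Complex.sq_norm]
    rw [hms]
  -- integral assembly
  set L : ℝ → ℝ := fun θ => Real.log (‖(p.eval (circleMap 0 1 θ))‖) with hL
  have hintL : ∫ θ in (0:ℝ)..(2*Real.pi), L θ
      = 2*Real.pi * Real.log (‖(p.eval 0)‖) := jensen_poly p hp
  have hper : Function.Periodic L (2*Real.pi) := by
    intro θ
    simp only [hL]
    rw [periodic_circleMap 0 1 θ]
  have hshift : ∫ θ in (-Real.pi)..Real.pi, L θ = ∫ θ in (0:ℝ)..(2*Real.pi), L θ := by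
    have h1 := hper.intervalIntegral_add_eq (-Real.pi) 0
    have h2 : -Real.pi + 2*Real.pi = Real.pi := by ring
    rw [h2, zero_add] at h1
    exact h1
  have hneg : ∫ θ in (-Real.pi)..Real.pi, L (-θ) = ∫ θ in (-Real.pi)..Real.pi, L θ := by
    rw [intervalIntegral.integral_comp_neg]
    norm_num
  have hintegrand : ∀ θ ∈ Set.uIcc (-Real.pi) Real.pi,
      Real.log (Delta m n θ * X.map Complex.ofReal * (Delta m n θ)ᴴ).det.re = 2 * L (-θ) := by
    intro θ _
    rw [hdet2 θ, Real.log_pow, hL]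
    push_cast
    ring
  have hmain : ∫ θ in (-Real.pi)..Real.pi,
      Real.log (Delta m n θ * X.map Complex.ofReal * (Delta m n θ)ᴴ).det.re
      = 2 * (2*Real.pi * Real.log (‖(p.eval 0)‖)) := by
    rw [intervalIntegral.integral_congr hintegrand, intervalIntegral.integral_const_mul,
      hneg, hshift, hintL]
  -- p.eval 0
  have hsum0 : (∑ j : Fin (n+1), (0:ℂ) ^ (j:ℕ) • Mc j) = Mc 0 := by
    rw [Finset.sum_eq_single 0]
    · simp
    · intro j _ hj
      have hj' : (j:ℕ) ≠ 0 := fun h => hj (Fin.ext h)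
      simp [zero_pow hj']
    · intro h
      exact absurd (Finset.mem_univ _) h
  have hA0 : p.eval 0 = (((Matrix.of fun a b : Fin m => A a (0, b)).det : ℝ) : ℂ) := by
    rw [key 0, hsum0]
    exact (Complex.ofRealHom.map_det _).symm
  have habs : Real.log (‖(p.eval 0)‖)
      = Real.log (Matrix.of fun a b : Fin m => A a (0, b)).det := by
    rw [hA0, Complex.norm_real, Real.norm_eq_abs, Real.log_abs]
  have hrhs1 : ((Matrix.of fun a b : Fin m => A a (0, b))ᵀ
      * (Matrix.of fun a b : Fin m => A a (0, b))).det
      = (Matrix.of fun a b : Fin m => A a (0, b)).det ^ 2 := by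
    rw [Matrix.det_mul, Matrix.det_transpose, sq]
  constructor
  · rw [hmain, hrhs1, Real.log_pow, habs]
    have hpi : Real.pi ≠ 0 := Real.pi_ne_zero
    push_cast
    field_simp
  · congr 2
    rw [hXA]
    ext a b
    simp [Matrix.mul_apply, Matrix.transpose_apply]
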